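/- Let p and q be coprime integers with p > q > 1. If an ω-word w labels a branch of the tree T_{p/q} from a state n ∈ ℕ and w is purely periodic (there exists T ≥ 1 with w_{k+T} = w_k for all k ≥ 1), then n = 0 and w_k = 0 for all k. -/

import Mathlib

/-- `w` labels a branch of the base-p/q automaton with digit set `E` from state `n`:
there are states `s 0 = n, s 1, s 2, …` with `q·s(k+1) = p·s k + w k` and `w k ∈ E`. -/
def IsBranch (p q : ℕ) (E : Set ℤ) (n : ℕ) (w : ℕ → ℤ) : Prop :=
  ∃ s : ℕ → ℕ, s 0 = n ∧ ∀ k : ℕ, (q : ℤ) * s (k + 1) = p * s k + w k ∧ w k ∈ E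

/-- `u` (a word of length `ℓ`) labels a path from `n` to `m` in the base-p/q automaton
with digit set `E`. -/
def IsPath (p q : ℕ) (E : Set ℤ) (n m ℓ : ℕ) (u : ℕ → ℤ) : Prop :=
  ∃ s : ℕ → ℕ, s 0 = n ∧ s ℓ = m ∧
    ∀ k < ℓ, (q : ℤ) * s (k + 1) = p * s k + u k ∧ u k ∈ E

/-- The canonical digit alphabet `A_p = {0, 1, …, p−1}`. -/
def Ap (p : ℕ) : Set ℤ := Set.Icc 0 ((p : ℤ) - 1)

/-- The lower alphabet `{0, 1, …, q−1}`. -/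
def LowAlph (q : ℕ) : Set ℤ := Set.Icc 0 ((q : ℤ) - 1)

/-- The upper alphabet `{p−q, …, p−1}`. -/
def UpAlph (p q : ℕ) : Set ℤ := Set.Icc ((p : ℤ) - q) ((p : ℤ) - 1)

/-- The alphabet `D = {p−2q+1, …, p−1}` of the automaton `S_{p/q}`. -/
def Dalph (p q : ℕ) : Set ℤ := Set.Icc ((p : ℤ) - 2 * q + 1) ((p : ℤ) - 1)

/-- Evaluation after the radix point: `ρ(w) = Σ_{i≥1} (w_i/q)·(q/p)^i`
(here `w k` is the `(k+1)`-st digit). -/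
noncomputable def rho (p q : ℕ) (w : ℕ → ℤ) : ℝ :=
  ∑' i : ℕ, ((w i : ℝ) / q) * ((q : ℝ) / p) ^ (i + 1)

theorem stmt18 (p q : ℕ) (hco : Nat.Coprime p q) (hq : 1 < q) (hpq : q < p)
    (n : ℕ) (w : ℕ → ℤ) (hw : IsBranch p q (Ap p) n w)
    (hper : ∃ T : ℕ, 1 ≤ T ∧ ∀ k, w (k + T) = w k) :
    n = 0 ∧ ∀ k, w k = 0 := by
  obtain ⟨s, hs0, hsw⟩ := hw
  obtain ⟨T, hT1, hTper⟩ := hper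
  have hw0 : ∀ k, 0 ≤ w k := fun k => (hsw k).2.1
  have hstep : ∀ k, (q:ℤ) * s (k+1) = p * s k + w k := fun k => (hsw k).1
  -- telescoping
  have key : ∀ k m, (q:ℤ)^m * s (k+m) = (p:ℤ)^m * s k +
      ∑ i ∈ Finset.range m, (p:ℤ)^(m-1-i) * (q:ℤ)^i * w (k+i) := by
    intro k m
    induction m with
    | zero => simp
    | succ m ih =>
      have e : ∀ i ∈ Finset.range m, (p:ℤ) * ((p:ℤ)^(m-1-i) * (q:ℤ)^i * w (k+i)) =
          (p:ℤ)^(m-i) * (q:ℤ)^i * w (k+i) := by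
        intro i hi
        have hi' : i < m := Finset.mem_range.mp hi
        have : m - i = (m - 1 - i) + 1 := by omega
        rw [this, pow_succ]
        ring
      calc (q:ℤ)^(m+1) * s (k+(m+1))
          = (q:ℤ)^m * ((q:ℤ) * s ((k+m)+1)) := by ring_nf
        _ = (q:ℤ)^m * ((p:ℤ) * s (k+m) + w (k+m)) := by rw [hstep]
        _ = (p:ℤ) * ((q:ℤ)^m * s (k+m)) + (q:ℤ)^m * w (k+m) := by ring
        _ = (p:ℤ) * ((p:ℤ)^m * s k + ∑ i ∈ Finset.range m,
              (p:ℤ)^(m-1-i) * (q:ℤ)^i * w (k+i)) + (q:ℤ)^m * w (k+m) := by rw [ih]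
        _ = (p:ℤ)^(m+1) * s k + ((∑ i ∈ Finset.range m,
              (p:ℤ) * ((p:ℤ)^(m-1-i) * (q:ℤ)^i * w (k+i))) + (q:ℤ)^m * w (k+m)) := by
            rw [← Finset.mul_sum]; ring
        _ = (p:ℤ)^(m+1) * s k + ((∑ i ∈ Finset.range m,
              (p:ℤ)^(m-i) * (q:ℤ)^i * w (k+i)) + (q:ℤ)^m * w (k+m)) := by
            rw [Finset.sum_congr rfl e]
        _ = (p:ℤ)^(m+1) * s k + ∑ i ∈ Finset.range (m+1),
              (p:ℤ)^(m+1-1-i) * (q:ℤ)^i * w (k+i) := by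
            rw [Finset.sum_range_succ]
            simp [Nat.add_sub_cancel]
  -- periodic extension
  have hper' : ∀ j i, w (i + j*T) = w i := by
    intro j
    induction j with
    | zero => simp
    | succ j ih =>
      intro i
      have e : i + (j+1)*T = (i + j*T) + T := by ring
      rw [e, hTper, ih]
  set C : ℤ := ∑ i ∈ Finset.range T, (p:ℤ)^(T-1-i) * (q:ℤ)^i * w i with hC
  have eqj : ∀ j, (q:ℤ)^T * s (j*T + T) = (p:ℤ)^T * s (j*T) + C := by
    intro j
    have := key (j*T) T
    rw [this]
    congr 1
    apply Finset.sum_congr rfl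
    intro i _
    rw [show j*T + i = i + j*T by ring, hper']
  set d : ℕ → ℤ := fun j => (s ((j+1)*T) : ℤ) - s (j*T) with hd
  have hdstep : ∀ j, (q:ℤ)^T * d (j+1) = (p:ℤ)^T * d j := by
    intro j
    have h1 := eqj (j+1)
    have h2 := eqj j
    have e1 : (j+1)*T = j*T + T := by ring
    have e2 : (j+2)*T = (j+1)*T + T := by ring
    rw [e1] at h1
    simp only [hd, e2, e1]
    linear_combination h1 - h2
  have hdpow : ∀ j, (q:ℤ)^(T*j) * d j = (p:ℤ)^(T*j) * d 0 := by
    intro j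
    induction j with
    | zero => simp
    | succ j ih =>
      have e : T*(j+1) = T*j + T := by ring
      rw [e, pow_add, pow_add]
      linear_combination ((q:ℤ)^(T*j)) * hdstep j + ((p:ℤ)^T) * ih
  have hcop : ∀ j : ℕ, IsCoprime ((q:ℤ)^(T*j)) ((p:ℤ)^(T*j)) := by
    intro j
    exact (Nat.isCoprime_iff_coprime.mpr hco.symm).pow
  have hdvd : ∀ j, ((q:ℤ)^(T*j)) ∣ d 0 := by
    intro j
    have : ((q:ℤ)^(T*j)) ∣ (p:ℤ)^(T*j) * d 0 := ⟨d j, (hdpow j).symm⟩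
    exact (hcop j).dvd_of_dvd_mul_left this
  have hd0 : d 0 = 0 := by
    by_contra h
    set j := (d 0).natAbs with hj
    have h2 : ((q:ℤ)^(T*j)) ≤ |d 0| := Int.le_of_dvd (abs_pos.mpr h) ((dvd_abs _ _).mpr (hdvd j))
    have h3 : (q:ℤ)^(T*j) ≤ (j:ℤ) := by
      rwa [Int.abs_eq_natAbs, ← hj] at h2
    have h4 : q^(T*j) ≤ j := by exact_mod_cast h3
    have h5 : j < q^j := Nat.lt_pow_self (n := j) hq
    have h6 : q^j ≤ q^(T*j) := Nat.pow_le_pow_right (le_of_lt hq) (Nat.le_mul_of_pos_left j (by omega))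
    omega
  -- s T = s 0
  have hsT : (s T : ℤ) = s 0 := by
    have := hd0
    simp only [hd] at this
    simp only [zero_add, one_mul, Nat.zero_mul] at this
    omega
  have heq0 := eqj 0
  simp only [Nat.zero_mul, Nat.zero_add, zero_add] at heq0
  rw [hsT] at heq0
  have hCnn : 0 ≤ C := by
    apply Finset.sum_nonneg
    intro i _
    exact mul_nonneg (mul_nonneg (pow_nonneg (by positivity) _) (pow_nonneg (by positivity) _)) (hw0 i)
  have hlt : (q:ℤ)^T < (p:ℤ)^T := by
    apply pow_lt_pow_left₀ (by exact_mod_cast hpq) (by positivity)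
    omega
  have hs0nn : (0:ℤ) ≤ (s 0 : ℤ) := by positivity
  have hs00 : (s 0 : ℤ) = 0 := by nlinarith
  have hC0 : C = 0 := by nlinarith
  have hp0 : (0:ℤ) < (p:ℤ) := by exact_mod_cast (by omega : 0 < p)
  have hq0 : (0:ℤ) < (q:ℤ) := by exact_mod_cast (by omega : 0 < q)
  have hwlt : ∀ i < T, w i = 0 := by
    intro i hi
    have := (Finset.sum_eq_zero_iff_of_nonneg (fun i _ =>
      mul_nonneg (mul_nonneg (pow_nonneg (by positivity) _) (pow_nonneg (by positivity) _)) (hw0 i))).mp hC0 i (Finset.mem_range.mpr hi)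
    have hcoeff : (0:ℤ) < (p:ℤ)^(T-1-i) * (q:ℤ)^i := by positivity
    nlinarith [this]
  constructor
  · have : s 0 = 0 := by exact_mod_cast hs00
    omega
  · intro k
    have e : k = k % T + (k / T) * T := by
      have := Nat.mod_add_div k T
      linarith
    rw [e, hper']
    exact hwlt (k % T) (Nat.mod_lt k (by omega))
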